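/- Let 0<q<1, λ>0, μ>0, and z ∈ ℝ with |z| > τ_{λμ,q}. Then every minimizer v* of v ↦ (z-v)²/(2μ) + λ|v|^q is nonzero and satisfies |v*| > η_{λμ,q} = (2λμ(1-q))^{1/(2-q)}. -/

import Mathlib

set_option maxHeartbeats 1000000 in
/-- Auxiliary: the case `z > 0`. -/
lemma prox_aux (q lam mu z vstar : ℝ) (hq0 : 0 < q)
    (hq1 : q < 1) (hlam : 0 < lam) (hmu : 0 < mu)
    (hz : (2 - q) / (2 - 2 * q) * (2 * lam * mu * (1 - q)) ^ ((1 : ℝ) / (2 - q)) < z)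
    (hmin : ∀ v : ℝ, (z - vstar) ^ 2 / (2 * mu) + lam * |vstar| ^ q ≤
      (z - v) ^ 2 / (2 * mu) + lam * |v| ^ q) :
    (2 * lam * mu * (1 - q)) ^ ((1 : ℝ) / (2 - q)) < vstar := by
  have h1q : (0:ℝ) < 1 - q := by linarith
  have h2q : (0:ℝ) < 2 - q := by linarith
  have h22 : (0:ℝ) < 2 - 2*q := by linarith
  have h22' : (2 - 2*q : ℝ) ≠ 0 := ne_of_gt h22
  have hc : (0:ℝ) < 2 * lam * mu * (1 - q) := by positivity
  set e : ℝ := (2 * lam * mu * (1 - q)) ^ ((1 : ℝ) / (2 - q)) with he_def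
  have he : 0 < e := Real.rpow_pos_of_pos hc _
  have hec : e ^ (2 - q) = 2 * lam * mu * (1 - q) := by
    rw [he_def, one_div, Real.rpow_inv_rpow hc.le (ne_of_gt h2q)]
  set A : ℝ := e ^ q with hA_def
  have hA : 0 < A := Real.rpow_pos_of_pos he _
  have hee : e * e = A * (2 * lam * mu * (1 - q)) := by
    have h := Real.rpow_add he q (2 - q)
    rw [hec] at h
    have h2 : q + (2 - q) = (2:ℝ) := by ring
    rw [h2, Real.rpow_two, ← hA_def, pow_two] at h
    exact h
  have hzpos : 0 < z := lt_trans (by positivity) hz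
  have hz' : (2 - q) / (2 - 2 * q) * e < z := hz
  have h2mu : (0:ℝ) < 2 * mu := by positivity
  -- cleared-denominator version of minimality
  have hmin' : ∀ v : ℝ, (z - vstar) ^ 2 + 2 * mu * (lam * |vstar| ^ q) ≤
      (z - v) ^ 2 + 2 * mu * (lam * |v| ^ q) := by
    intro v
    have h := mul_le_mul_of_nonneg_left (hmin v) h2mu.le
    have e1 : ∀ w : ℝ, 2 * mu * ((z - w) ^ 2 / (2 * mu) + lam * |w| ^ q)
        = (z - w) ^ 2 + 2 * mu * (lam * |w| ^ q) := by
      intro w; field_simp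
    rw [e1, e1] at h
    exact h
  -- vstar is nonnegative
  have hv0 : 0 ≤ vstar := by
    by_contra h
    push_neg at h
    have h1 := hmin' (-vstar)
    rw [abs_neg] at h1
    nlinarith [mul_pos hzpos (neg_pos.2 h)]
  -- the key identity for τ·e
  have htau : (2 - q) / (2 - 2 * q) * e * e = lam * mu * (2 - q) * A := by
    rw [mul_assoc, hee]
    field_simp
  have hτz : (2 - q) / (2 - 2 * q) * e * e < z * e := mul_lt_mul_of_pos_right hz' he
  by_contra hcon
  push_neg at hcon
  rcases eq_or_lt_of_le hv0 with h0 | ht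
  · -- vstar = 0 : compare with v = e
    have h1 := hmin' e
    rw [← h0, abs_zero, Real.zero_rpow (ne_of_gt hq0), abs_of_pos he, ← hA_def] at h1
    -- h1 : z^2 + 0 ≤ (z - e)^2 + 2μλA
    nlinarith [hτz, hee, htau]
  · -- vstar > 0
    have habs : |vstar| = vstar := abs_of_pos ht
    set T : ℝ := vstar ^ q with hT_def
    have hT : 0 < T := Real.rpow_pos_of_pos ht _
    rcases le_or_gt (z * vstar) (vstar ^ 2 + lam * mu * q * T) with hca | hcb
    · -- case A : stationarity fails towards 0
      have h0 := hmin' 0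
      rw [abs_zero, Real.zero_rpow (ne_of_gt hq0), habs, ← hT_def] at h0
      -- h0 : (z-vstar)^2 + 2μλT ≤ z^2
      have hct : 2 * lam * mu * (1 - q) * T ≤ vstar ^ 2 := by nlinarith
      have hv2 : vstar ^ 2 = T * vstar ^ (2 - q) := by
        have h := Real.rpow_add ht q (2 - q)
        have h2 : q + (2 - q) = (2:ℝ) := by ring
        rw [h2, Real.rpow_two] at h
        rw [hT_def]
        linarith [h]
      have hle : 2 * lam * mu * (1 - q) ≤ vstar ^ (2 - q) := by
        rw [hv2] at hct
        have := (mul_le_mul_iff_of_pos_left hT).mp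
          (show T * (2 * lam * mu * (1 - q)) ≤ T * vstar ^ (2 - q) by linarith)
        linarith
      have hev : e ≤ vstar := by
        have h := Real.rpow_le_rpow hc.le hle (by positivity : (0:ℝ) ≤ (1:ℝ)/(2-q))
        rw [one_div, Real.rpow_rpow_inv ht.le (ne_of_gt h2q)] at h
        rw [he_def, one_div]
        exact h
      have hveq : vstar = e := le_antisymm hcon hev
      have hTA : T = A := by rw [hT_def, hveq, ← hA_def]
      rw [hveq, hTA] at hca
      -- hca : z * e ≤ e^2 + λμ q A ; but τ e = λμ(2-q) A and τ e < z e
      nlinarith [hτz, hee, htau]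
    · -- case B : move further away from 0
      set D : ℝ := lam * mu * q * T / vstar with hD_def
      have hD : D * vstar = lam * mu * q * T := div_mul_cancel₀ _ (ne_of_gt ht)
      have hDpos : 0 < D := by
        rw [hD_def]
        exact div_pos (mul_pos (mul_pos (mul_pos hlam hmu) hq0) hT) ht
      set δ : ℝ := z - vstar - D with hδ_def
      have hδ : 0 < δ := by
        have h1 : lam * mu * q * T / vstar < z - vstar := by
          rw [div_lt_iff₀ ht]
          nlinarith [hcb]
        rw [hδ_def, hD_def]
        linarith
      set s : ℝ := δ / vstar with hs_def
      have hs : vstar * s = δ := mul_div_cancel₀ _ (ne_of_gt ht)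
      have hspos : 0 < s := by rw [hs_def]; exact div_pos hδ ht
      -- Bernoulli
      have hb : (1 + s) ^ q ≤ 1 + q * s :=
        rpow_one_add_le_one_add_mul_self (by linarith) hq0.le hq1.le
      have hw : vstar + δ = vstar * (1 + s) := by
        rw [mul_add, mul_one, hs]
      have hwpos : 0 < vstar + δ := by linarith
      have hwq : (vstar + δ) ^ q ≤ T * (1 + q * s) := by
        rw [hw, Real.mul_rpow ht.le (by positivity : (0:ℝ) ≤ 1 + s), ← hT_def]
        exact mul_le_mul_of_nonneg_left hb hT.le
      have h2 := hmin' (vstar + δ)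
      rw [habs, ← hT_def, abs_of_pos hwpos] at h2
      -- h2 : (z-vstar)^2 + 2μλT ≤ (z-(vstar+δ))^2 + 2μλ (vstar+δ)^q
      have hub : 2 * mu * lam * ((vstar + δ) ^ q) ≤ 2 * mu * lam * (T * (1 + q * s)) :=
        mul_le_mul_of_nonneg_left hwq (by positivity)
      -- key polynomial identity
      have hkey : (z - (vstar + δ)) ^ 2 + 2 * mu * (lam * (T * (1 + q * s)))
          = (z - vstar) ^ 2 + 2 * mu * (lam * T) - δ ^ 2 := by
        linear_combination (-2*s) * hD + (2*D) * hs + (2*δ) * hδ_def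
      linarith [h2, hub, hkey, pow_pos hδ 2]

/-- If `|z| > τ = ((2-q)/(2-2q))(2λμ(1-q))^(1/(2-q))`, then every minimizer `v*` of
`v ↦ (z-v)²/(2μ) + λ|v|^q` is nonzero and satisfies `|v*| > η = (2λμ(1-q))^(1/(2-q))`. -/
theorem prox_above_threshold_minimizer_large (q lam mu z vstar : ℝ) (hq0 : 0 < q)
    (hq1 : q < 1) (hlam : 0 < lam) (hmu : 0 < mu)
    (hz : (2 - q) / (2 - 2 * q) * (2 * lam * mu * (1 - q)) ^ ((1 : ℝ) / (2 - q)) < |z|)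
    (hmin : ∀ v : ℝ, (z - vstar) ^ 2 / (2 * mu) + lam * |vstar| ^ q ≤
      (z - v) ^ 2 / (2 * mu) + lam * |v| ^ q) :
    vstar ≠ 0 ∧ (2 * lam * mu * (1 - q)) ^ ((1 : ℝ) / (2 - q)) < |vstar| := by
  have h1q : (0:ℝ) < 1 - q := by linarith
  have h2q : (0:ℝ) < 2 - q := by linarith
  have h22 : (0:ℝ) < 2 - 2*q := by linarith
  have hc : (0:ℝ) < 2 * lam * mu * (1 - q) := by positivity
  have he : 0 < (2 * lam * mu * (1 - q)) ^ ((1 : ℝ) / (2 - q)) :=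
    Real.rpow_pos_of_pos hc _
  have hτ : 0 < (2 - q) / (2 - 2 * q) * (2 * lam * mu * (1 - q)) ^ ((1 : ℝ) / (2 - q)) :=
    mul_pos (div_pos h2q h22) he
  rcases lt_trichotomy z 0 with hzneg | hzzero | hzpos
  · -- z < 0 : apply aux to -z, -vstar
    rw [abs_of_neg hzneg] at hz
    have hmin2 : ∀ v : ℝ, (-z - -vstar) ^ 2 / (2 * mu) + lam * |(-vstar)| ^ q ≤
        (-z - v) ^ 2 / (2 * mu) + lam * |v| ^ q := by
      intro v
      have h := hmin (-v)
      rw [abs_neg] at h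
      have e1 : (-z - -vstar) ^ 2 = (z - vstar) ^ 2 := by ring
      have e2 : (-z - v) ^ 2 = (z - -v) ^ 2 := by ring
      rw [e1, e2, abs_neg]
      exact h
    have h := prox_aux q lam mu (-z) (-vstar) hq0 hq1 hlam hmu hz hmin2
    have hvneg : vstar < 0 := by nlinarith
    rw [abs_of_neg hvneg]
    exact ⟨ne_of_lt hvneg, h⟩
  · rw [hzzero, abs_zero] at hz
    exact absurd hz (not_lt.2 hτ.le)
  · rw [abs_of_pos hzpos] at hz
    have h := prox_aux q lam mu z vstar hq0 hq1 hlam hmu hz hmin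
    have hvpos : 0 < vstar := lt_trans he h
    rw [abs_of_pos hvpos]
    exact ⟨ne_of_gt hvpos, h⟩
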